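/- Let G be a word-representable graph on m vertices with minimum word-representant length l(G), and let w_G be a minimum length word-representant with initial permutation π(w_G) = u₁u₂...u_m. With K₂ on vertices {1,2} and w_{K₂} = 12, the word w' = (u₂²u₂¹u₃²u₃¹...u_m²u_m¹)(u₁²u₂²...u_m²) g^{12}(w_G) represents the Cartesian product G □ K₂, where g^{12}(w_G) replaces each letter u of w_G by u¹u² and u^i denotes the vertex (u,i) of G □ K₂. -/

import Mathlib

open SimpleGraph

variable {V : Type*}

/-- Two distinct letters `x` and `y` alternate in a word `w` if the subsequence of `w`
consisting of all occurrences of `x` and `y` is strictly alternating. -/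
def Alternates [DecidableEq V] (x y : V) (w : List V) : Prop :=
  (w.filter (fun z => decide (z = x ∨ z = y))).Chain' (· ≠ ·)

/-- A word `w` represents the graph `G` if it contains every vertex at least once and
two distinct vertices are adjacent iff they alternate in `w`. -/
def Represents [DecidableEq V] (G : SimpleGraph V) (w : List V) : Prop :=
  (∀ v : V, v ∈ w) ∧ ∀ x y : V, x ≠ y → (G.Adj x y ↔ Alternates x y w)

/-- A graph is word-representable if some word represents it. -/
def WordRepresentable [DecidableEq V] (G : SimpleGraph V) : Prop :=
  ∃ w : List V, Represents G w

/-- `l(G)`: the minimum length of a word-representant of `G`. -/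
noncomputable def reprLen [DecidableEq V] (G : SimpleGraph V) : ℕ :=
  sInf {n | ∃ w : List V, Represents G w ∧ w.length = n}

set_option linter.deprecated false in
@[simp] theorem List.chain'_singleton {α : Type*} {R : α → α → Prop} (a : α) :
    List.Chain' R [a] := List.IsChain.singleton a

set_option linter.deprecated false in
@[simp] theorem List.chain'_cons {α : Type*} {R : α → α → Prop} {x y : α} {l : List α} :
    List.Chain' R (x :: y :: l) ↔ R x y ∧ List.Chain' R (y :: l) := List.isChain_cons_cons

set_option linter.deprecated false in
theorem List.chain'_map {α β : Type*} {R : α → α → Prop} (f : β → α) {l : List β} :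
    List.Chain' R (List.map f l) ↔ List.Chain' (fun a b : β => R (f a) (f b)) l :=
  List.isChain_map f

set_option linter.deprecated false in
theorem List.chain'_append {α : Type*} {R : α → α → Prop} {l₁ l₂ : List α} :
    List.Chain' R (l₁ ++ l₂) ↔ List.Chain' R l₁ ∧ List.Chain' R l₂ ∧
      ∀ x ∈ l₁.getLast?, ∀ y ∈ l₂.head?, R x y := List.isChain_append

-- W1: generic flatMap filter
private lemma filter_flatMap_eq {α β : Type*} (l : List α) (g : α → List β) (p : β → Bool)
    (q : α → Bool) (h : α → List β) (hyp : ∀ w, (g w).filter p = if q w then h w else []) :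
    (l.flatMap g).filter p = (l.filter q).flatMap h := by
  induction l with
  | nil => rfl
  | cons a l ih =>
    rw [List.flatMap_cons, List.filter_append, ih, List.filter_cons, hyp a]
    by_cases hq : q a <;> simp [hq]

-- W2a: getLast? of filter of dedup
private lemma getLast?_filter_dedup [DecidableEq V] (q : V → Bool) (l : List V) :
    ((l.dedup).filter q).getLast? = (l.filter q).getLast? := by
  induction l with
  | nil => rfl
  | cons a l ih =>
    by_cases ha : a ∈ l
    · rw [List.dedup_cons_of_mem ha, ih, List.filter_cons]
      by_cases hq : q a
      · simp only [hq, if_true]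
        have hne : l.filter q ≠ [] := by
          intro h
          have := List.filter_eq_nil_iff.mp h a ha
          simp [hq] at this
        cases hfl : l.filter q with
        | nil => exact absurd hfl hne
        | cons b m => simp [List.getLast?_cons_cons]
      · simp [hq]
    · rw [List.dedup_cons_of_notMem ha, List.filter_cons, List.filter_cons]
      by_cases hq : q a
      · simp only [hq, if_true]
        by_cases hfl : l.filter q = []
        · have hfd : (l.dedup).filter q = [] := by
            rw [List.filter_eq_nil_iff] at hfl ⊢
            intro b hb; exact hfl b (List.mem_dedup.mp hb)
          rw [hfl, hfd]
        · have hfd : (l.dedup).filter q ≠ [] := by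
            intro h; apply hfl
            rw [List.filter_eq_nil_iff] at h ⊢
            intro b hb; exact h b (List.mem_dedup.mpr hb)
          cases h1 : (l.dedup).filter q with
          | nil => exact absurd h1 hfd
          | cons b1 m1 =>
            cases h2 : l.filter q with
            | nil => exact absurd h2 hfl
            | cons b2 m2 =>
              rw [List.getLast?_cons_cons, List.getLast?_cons_cons, ← h1, ← h2, ih]
      · simp only [hq, if_false]; exact ih

-- W2b: head? of filter of π(w)
private lemma head?_filter_pi [DecidableEq V] (q : V → Bool) (w : List V) :
    ((w.reverse.dedup.reverse).filter q).head? = (w.filter q).head? := by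
  rw [List.filter_reverse, List.head?_reverse, getLast?_filter_dedup,
    List.filter_reverse, List.getLast?_reverse]

-- W3: structure of a nodup list contained in a pair
private lemma eq_pair_of (l : List V) (hn : l.Nodup) (u v : V) (huv : u ≠ v)
    (hu : u ∈ l) (hv : v ∈ l) (hall : ∀ z ∈ l, z = u ∨ z = v) :
    l = [u, v] ∨ l = [v, u] := by
  match l, hn with
  | [], _ => simp at hu
  | [a], _ =>
    simp only [List.mem_singleton] at hu hv
    exact absurd (hu.trans hv.symm) huv
  | a :: b :: r, hn => ?_
  simp only [List.nodup_cons, List.mem_cons] at hn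
  have hab : a ≠ b := fun h => hn.1 (Or.inl h)
  have hr : r = [] := by
    cases r with
    | nil => rfl
    | cons c r' =>
      have hca := hall c (by simp)
      have hha := hall a (by simp)
      have hhb := hall b (by simp)
      have h1 : a ≠ c := fun h => hn.1 (Or.inr (by simp [h]))
      have h2 : b ≠ c := fun h => hn.2.1 (by simp [h])
      rcases hha with rfl|rfl <;> rcases hhb with rfl|rfl <;> rcases hca with rfl|rfl <;>
        simp_all
  subst hr
  have hha := hall a (by simp)
  have hhb := hall b (by simp)
  rcases hha with rfl|rfl <;> rcases hhb with rfl|rfl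
  · exact absurd rfl hab
  · exact Or.inl rfl
  · exact Or.inr rfl
  · exact absurd rfl hab

private lemma flatMap_sing {α β : Type*} (l : List α) (f : α → β) :
    (l.flatMap fun a => [f a]) = l.map f := by
  induction l with
  | nil => rfl
  | cons a l ih => simp [List.flatMap_cons, ih]

private lemma alternates_comm [DecidableEq V] (x y : V) (w : List V) :
    Alternates x y w ↔ Alternates y x w := by
  unfold Alternates
  rw [List.filter_congr (fun z _ => decide_eq_decide.mpr or_comm)]

private lemma chain_map_pair [DecidableEq V] (i₀ : Fin 2) (L : List V) :
    List.Chain' (· ≠ ·) (L.map (fun w => (w, i₀))) ↔ List.Chain' (· ≠ ·) L := by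
  rw [List.chain'_map]
  constructor
  · exact fun h => h.imp fun a b hab => fun hr => hab (by rw [hr])
  · exact fun h => h.imp fun a b hab => fun hr => hab (congrArg Prod.fst hr)

private lemma chain_aux [DecidableEq V] (u : V) (l : List V) (hl : ∀ a ∈ l, a = u) :
    List.Chain' (· ≠ ·)
      (((u, (1:Fin 2)) : V × Fin 2) :: l.flatMap fun w => [(w,(0:Fin 2)),(w,(1:Fin 2))]) := by
  induction l with
  | nil => simp
  | cons a t ih =>
    have ha : a = u := hl a (by simp)
    subst ha
    rw [List.flatMap_cons]
    simp only [List.cons_append, List.nil_append]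
    rw [List.chain'_cons, List.chain'_cons]
    refine ⟨?_, ?_, ih fun b hb => hl b (by simp [hb])⟩ <;>
      simp [Prod.ext_iff, Fin.ext_iff]

private lemma chain_pref [DecidableEq V] (u v : V) (huv : u ≠ v) (t P : List V)
    (hP : P = [u,v] ∨ P = [v] ∨ P = [u,v,u,v] ∨ P = [v,u,v]) (ht : t.head? = some u) :
    (List.Chain' (· ≠ ·) (P ++ t) ↔ List.Chain' (· ≠ ·) t) := by
  cases t with
  | nil => simp at ht
  | cons b t' =>
    simp only [List.head?_cons, Option.some.injEq] at ht
    subst ht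
    constructor
    · exact fun h => h.suffix ⟨P, rfl⟩
    · intro h
      rw [List.chain'_append]
      refine ⟨?_, h, ?_⟩ <;> rcases hP with rfl|rfl|rfl|rfl <;>
        simp [List.chain'_cons, huv, huv.symm, Ne]

private lemma alt_same [DecidableEq V] (wG us : List V)
    (hus : wG.reverse.dedup.reverse = us) (u : V) (hu : u ∈ wG) :
    Alternates ((u, (0:Fin 2)) : V × Fin 2) (u, (1:Fin 2))
      (((us.drop 1).flatMap fun w => [(w, (1 : Fin 2)), (w, (0 : Fin 2))]) ++
        (us.map fun w => (w, (1 : Fin 2))) ++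
        (wG.flatMap fun w => [(w, (0 : Fin 2)), (w, (1 : Fin 2))])) := by
  have husn : us.Nodup := by
    rw [← hus, List.nodup_reverse]; exact List.nodup_dedup _
  have humem : u ∈ us := by
    rw [← hus]; rw [List.mem_reverse, List.mem_dedup, List.mem_reverse]; exact hu
  unfold Alternates
  rw [List.filter_append, List.filter_append]
  have hA : (((us.drop 1).flatMap fun w => [(w, (1 : Fin 2)), (w, (0 : Fin 2))]).filter
        (fun z => decide (z = (u,(0:Fin 2)) ∨ z = (u,(1:Fin 2)))))
      = ((us.drop 1).filter (fun z => decide (z = u))).flatMap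
          (fun w => [(w,(1:Fin 2)),(w,(0:Fin 2))]) := by
    apply filter_flatMap_eq
    intro w
    by_cases h : w = u <;> simp [h, Prod.ext_iff, List.filter]
  have hB : ((us.map fun w => (w, (1 : Fin 2))).filter
        (fun z => decide (z = (u,(0:Fin 2)) ∨ z = (u,(1:Fin 2)))))
      = [(u, (1:Fin 2))] := by
    rw [List.filter_map]
    have : us.filter ((fun z => decide (z = (u,(0:Fin 2)) ∨ z = (u,(1:Fin 2)))) ∘
        (fun w => (w, (1 : Fin 2)))) = us.filter (fun z => decide (z = u)) := by
      apply List.filter_congr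
      intro w _
      simp [Prod.ext_iff]
    rw [this, List.filter_eq, List.count_eq_one_of_mem husn humem]
    rfl
  have hC : ((wG.flatMap fun w => [(w, (0 : Fin 2)), (w, (1 : Fin 2))]).filter
        (fun z => decide (z = (u,(0:Fin 2)) ∨ z = (u,(1:Fin 2)))))
      = (wG.filter (fun z => decide (z = u))).flatMap
          (fun w => [(w,(0:Fin 2)),(w,(1:Fin 2))]) := by
    apply filter_flatMap_eq
    intro w
    by_cases h : w = u <;> simp [h, Prod.ext_iff, List.filter]
  rw [hA, hB, hC]
  have hD : (us.drop 1).filter (fun z => decide (z = u)) = [] ∨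
      (us.drop 1).filter (fun z => decide (z = u)) = [u] := by
    have hnd : (us.drop 1).Nodup := husn.sublist (List.drop_sublist 1 us)
    rw [List.filter_eq]
    have hle : (us.drop 1).count u ≤ 1 := List.nodup_iff_count_le_one.mp hnd u
    interval_cases h : (us.drop 1).count u
    · exact Or.inl rfl
    · exact Or.inr rfl
  have hchain := chain_aux u (wG.filter (fun z => decide (z = u)))
    (fun a ha => by simpa using (List.mem_filter.mp ha).2)
  rcases hD with hD | hD <;> rw [hD]
  · simpa using hchain
  · simp only [List.flatMap_cons, List.flatMap_nil, List.cons_append, List.nil_append,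
      List.append_nil]
    rw [List.chain'_cons, List.chain'_cons]
    refine ⟨?_, ?_, ?_⟩
    · simp [Prod.ext_iff, Fin.ext_iff]
    · simp [Prod.ext_iff, Fin.ext_iff]
    · simpa using hchain

private lemma alt_eq_case [DecidableEq V] (wG us : List V)
    (hus : wG.reverse.dedup.reverse = us) (u v : V) (huv : u ≠ v)
    (hu : u ∈ wG) (hv : v ∈ wG) (i₀ : Fin 2) :
    (Alternates ((u, i₀) : V × Fin 2) (v, i₀)
      (((us.drop 1).flatMap fun w => [(w, (1 : Fin 2)), (w, (0 : Fin 2))]) ++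
        (us.map fun w => (w, (1 : Fin 2))) ++
        (wG.flatMap fun w => [(w, (0 : Fin 2)), (w, (1 : Fin 2))])) ↔
      Alternates u v wG) := by
  have husn : us.Nodup := by rw [← hus, List.nodup_reverse]; exact List.nodup_dedup _
  have humem : u ∈ us := by
    rw [← hus, List.mem_reverse, List.mem_dedup, List.mem_reverse]; exact hu
  have hvmem : v ∈ us := by
    rw [← hus, List.mem_reverse, List.mem_dedup, List.mem_reverse]; exact hv
  unfold Alternates
  set q : V → Bool := fun z => decide (z = u ∨ z = v) with hq
  have hs : us.filter q = [u, v] ∨ us.filter q = [v, u] := by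
    apply eq_pair_of _ (husn.filter q) u v huv
    · exact List.mem_filter.mpr ⟨humem, by simp [hq]⟩
    · exact List.mem_filter.mpr ⟨hvmem, by simp [hq]⟩
    · intro z hz
      simpa [hq] using (List.mem_filter.mp hz).2
  have hhead : (us.filter q).head? = (wG.filter q).head? := by
    rw [← hus]; exact head?_filter_pi q wG
  have hdS : (us.drop 1).filter q = us.filter q ∨
      (us.drop 1).filter q = (us.filter q).tail := by
    cases us with
    | nil => simp at humem
    | cons c us' =>
      rw [List.drop_one, List.tail_cons, List.filter_cons]
      by_cases hc : q c
      · right; simp [hc]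
      · left; simp [hc]
  have hA : (((us.drop 1).flatMap fun w => [(w, (1 : Fin 2)), (w, (0 : Fin 2))]).filter
        (fun z => decide (z = (u, i₀) ∨ z = (v, i₀))))
      = ((us.drop 1).filter q).map (fun w => (w, i₀)) := by
    rw [← flatMap_sing]
    apply filter_flatMap_eq
    intro w
    by_cases h1 : w = u <;> by_cases h2 : w = v <;>
      fin_cases i₀ <;> simp_all [hq, Prod.ext_iff, List.filter]
  have hC : ((wG.flatMap fun w => [(w, (0 : Fin 2)), (w, (1 : Fin 2))]).filter
        (fun z => decide (z = (u, i₀) ∨ z = (v, i₀))))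
      = (wG.filter q).map (fun w => (w, i₀)) := by
    rw [← flatMap_sing]
    apply filter_flatMap_eq
    intro w
    by_cases h1 : w = u <;> by_cases h2 : w = v <;>
      fin_cases i₀ <;> simp_all [hq, Prod.ext_iff, List.filter]
  rw [List.filter_append, List.filter_append, hA, hC]
  have hio : i₀ = 0 ∨ i₀ = 1 := by omega
  rcases hio with rfl | rfl
  · have hB : ((us.map fun w => (w, (1 : Fin 2))).filter
        (fun z => decide (z = (u, (0:Fin 2)) ∨ z = (v, (0:Fin 2))))) = [] := by
      rw [List.filter_eq_nil_iff]
      rintro z hz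
      rw [List.mem_map] at hz
      obtain ⟨w, _, rfl⟩ := hz
      simp [Prod.ext_iff, Fin.ext_iff]
    rw [hB, List.append_nil, ← List.map_append, chain_map_pair]
    rcases hs with hsl | hsl <;> rcases hdS with hd | hd <;> rw [hsl] at hd hhead <;>
      (try simp only [List.tail_cons] at hd) <;> rw [hd]
    · exact chain_pref u v huv _ _ (Or.inl rfl) hhead.symm
    · exact chain_pref u v huv _ _ (Or.inr (Or.inl rfl)) hhead.symm
    · exact chain_pref v u huv.symm _ _ (Or.inl rfl) hhead.symm
    · exact chain_pref v u huv.symm _ _ (Or.inr (Or.inl rfl)) hhead.symm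
  · have hB : ((us.map fun w => (w, (1 : Fin 2))).filter
        (fun z => decide (z = (u, (1:Fin 2)) ∨ z = (v, (1:Fin 2)))))
        = (us.filter q).map (fun w => (w, (1:Fin 2))) := by
      rw [List.filter_map]
      apply congrArg
      apply List.filter_congr
      intro w _
      simp [hq, Prod.ext_iff]
    rw [hB, ← List.map_append, ← List.map_append, chain_map_pair]
    rcases hs with hsl | hsl <;> rcases hdS with hd | hd <;> rw [hsl] at hd hhead <;>
      (try simp only [List.tail_cons] at hd) <;> rw [hd, hsl]
    · have := chain_pref u v huv (wG.filter q) [u,v,u,v]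
        (Or.inr (Or.inr (Or.inl rfl))) hhead.symm
      simpa using this
    · have := chain_pref u v huv (wG.filter q) [v,u,v]
        (Or.inr (Or.inr (Or.inr rfl))) hhead.symm
      simpa using this
    · have := chain_pref v u huv.symm (wG.filter q) [v,u,v,u]
        (Or.inr (Or.inr (Or.inl rfl))) hhead.symm
      simpa using this
    · have := chain_pref v u huv.symm (wG.filter q) [u,v,u]
        (Or.inr (Or.inr (Or.inr rfl))) hhead.symm
      simpa using this

private lemma not_alt_case [DecidableEq V] (wG us : List V)
    (hus : wG.reverse.dedup.reverse = us) (u v : V) (huv : u ≠ v)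
    (hu : u ∈ wG) (hv : v ∈ wG) :
    ¬ Alternates ((u, (0:Fin 2)) : V × Fin 2) (v, (1:Fin 2))
      (((us.drop 1).flatMap fun w => [(w, (1 : Fin 2)), (w, (0 : Fin 2))]) ++
        (us.map fun w => (w, (1 : Fin 2))) ++
        (wG.flatMap fun w => [(w, (0 : Fin 2)), (w, (1 : Fin 2))])) := by
  have husn : us.Nodup := by rw [← hus, List.nodup_reverse]; exact List.nodup_dedup _
  have humem : u ∈ us := by
    rw [← hus, List.mem_reverse, List.mem_dedup, List.mem_reverse]; exact hu
  have hvmem : v ∈ us := by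
    rw [← hus, List.mem_reverse, List.mem_dedup, List.mem_reverse]; exact hv
  unfold Alternates
  set q : V → Bool := fun z => decide (z = u ∨ z = v) with hq
  set g : V → V × Fin 2 := fun w => (w, if w = u then (0:Fin 2) else 1) with hg
  have hs : us.filter q = [u, v] ∨ us.filter q = [v, u] := by
    apply eq_pair_of _ (husn.filter q) u v huv
    · exact List.mem_filter.mpr ⟨humem, by simp [hq]⟩
    · exact List.mem_filter.mpr ⟨hvmem, by simp [hq]⟩
    · intro z hz
      simpa [hq] using (List.mem_filter.mp hz).2
  have hhead : (us.filter q).head? = (wG.filter q).head? := by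
    rw [← hus]; exact head?_filter_pi q wG
  have hdS : (us.drop 1).filter q = us.filter q ∨
      (us.drop 1).filter q = (us.filter q).tail := by
    cases us with
    | nil => simp at humem
    | cons c us' =>
      rw [List.drop_one, List.tail_cons, List.filter_cons]
      by_cases hc : q c
      · right; simp [hc]
      · left; simp [hc]
  have hA : (((us.drop 1).flatMap fun w => [(w, (1 : Fin 2)), (w, (0 : Fin 2))]).filter
        (fun z => decide (z = (u, (0:Fin 2)) ∨ z = (v, (1:Fin 2)))))
      = ((us.drop 1).filter q).map g := by
    rw [← flatMap_sing]
    apply filter_flatMap_eq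
    intro w
    by_cases h1 : w = u <;> by_cases h2 : w = v <;>
      simp_all [hq, hg, Prod.ext_iff, List.filter]
  have hC : ((wG.flatMap fun w => [(w, (0 : Fin 2)), (w, (1 : Fin 2))]).filter
        (fun z => decide (z = (u, (0:Fin 2)) ∨ z = (v, (1:Fin 2)))))
      = (wG.filter q).map g := by
    rw [← flatMap_sing]
    apply filter_flatMap_eq
    intro w
    by_cases h1 : w = u <;> by_cases h2 : w = v <;>
      simp_all [hq, hg, Prod.ext_iff, List.filter]
  have hB : ((us.map fun w => (w, (1 : Fin 2))).filter
        (fun z => decide (z = (u, (0:Fin 2)) ∨ z = (v, (1:Fin 2)))))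
      = [v].map g := by
    rw [List.filter_map]
    have h2 : us.filter ((fun z => decide (z = (u, (0:Fin 2)) ∨ z = (v, (1:Fin 2)))) ∘
        (fun w => (w, (1 : Fin 2)))) = us.filter (fun z => decide (z = v)) := by
      apply List.filter_congr
      intro w _
      simp [Prod.ext_iff]
    rw [h2, List.filter_eq, List.count_eq_one_of_mem husn hvmem]
    simp [hg, huv.symm]
  rw [List.filter_append, List.filter_append, hA, hB, hC, ← List.map_append,
    ← List.map_append]
  intro hch
  rw [List.chain'_map] at hch
  have hvv : ∃ l₂, (v :: v :: l₂) <:+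
      (((us.drop 1).filter q ++ [v]) ++ wG.filter q) := by
    rcases hs with hsl | hsl
    · -- head of t is u; dS ends with v
      rcases hdS with hd | hd <;> rw [hsl] at hd <;> (try simp only [List.tail_cons] at hd)
        <;> rw [hd]
      · exact ⟨wG.filter q, ⟨[u], by simp⟩⟩
      · exact ⟨wG.filter q, ⟨[], by simp⟩⟩
    · -- t = v :: t'
      rw [hsl] at hhead
      cases ht : wG.filter q with
      | nil => rw [ht] at hhead; simp at hhead
      | cons b t' =>
        rw [ht] at hhead
        simp only [List.head?_cons, Option.some.injEq] at hhead
        exact ⟨t', ⟨(us.drop 1).filter q, by simp [hhead]⟩⟩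
  obtain ⟨l₂, hsuf⟩ := hvv
  have := hch.suffix hsuf
  rw [List.isChain_cons_cons] at this
  exact this.1 rfl


theorem stmt10 [Fintype V] [DecidableEq V] (G : SimpleGraph V) (wG : List V)
    (hrep : Represents G wG)
    (hmin : ∀ w' : List V, Represents G w' → wG.length ≤ w'.length)
    (us : List V) (hus : wG.reverse.dedup.reverse = us) :
    Represents (G □ (⊤ : SimpleGraph (Fin 2)))
      (((us.drop 1).flatMap fun u => [(u, (1 : Fin 2)), (u, (0 : Fin 2))]) ++
        (us.map fun u => (u, (1 : Fin 2))) ++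
        (wG.flatMap fun u => [(u, (0 : Fin 2)), (u, (1 : Fin 2))])) := by
  obtain ⟨hmem, hadj⟩ := hrep
  constructor
  · rintro ⟨a, k⟩
    refine List.mem_append.mpr (Or.inr ?_)
    rw [List.mem_flatMap]
    exact ⟨a, hmem a, by fin_cases k <;> simp⟩
  · rintro ⟨u, i⟩ ⟨v, j⟩ hxy
    rw [SimpleGraph.boxProd_adj]
    by_cases huv : u = v
    · subst huv
      have hij : i ≠ j := fun h => hxy (by rw [h])
      constructor
      · intro _
        fin_cases i <;> fin_cases j
        · exact absurd rfl hij
        · exact alt_same wG us hus u (hmem u)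
        · exact (alternates_comm _ _ _).mpr (alt_same wG us hus u (hmem u))
        · exact absurd rfl hij
      · intro _
        exact Or.inr ⟨(SimpleGraph.top_adj i j).mpr hij, rfl⟩
    · by_cases hij : i = j
      · subst hij
        have hiff : (G.Adj u v ∧ i = i ∨ ((⊤ : SimpleGraph (Fin 2)).Adj i i ∧ u = v)) ↔
            G.Adj u v := by simp [huv]
        rw [hiff, hadj u v huv]
        exact (alt_eq_case wG us hus u v huv (hmem u) (hmem v) i).symm
      · have hfalse : ¬ (G.Adj u v ∧ i = j ∨
            ((⊤ : SimpleGraph (Fin 2)).Adj i j ∧ u = v)) := by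
          rintro (⟨_, h⟩ | ⟨_, h⟩)
          · exact hij h
          · exact huv h
        refine ⟨fun h => absurd h hfalse, fun halt => absurd halt ?_⟩
        fin_cases i <;> fin_cases j
        · exact absurd rfl hij
        · exact not_alt_case wG us hus u v huv (hmem u) (hmem v)
        · intro h
          exact not_alt_case wG us hus v u (Ne.symm huv) (hmem v) (hmem u)
            ((alternates_comm _ _ _).mp h)
        · exact absurd rfl hij
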